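/- Fix d > 0, μ > 0 and a kernel J satisfying (J). There do not exist d̃, μ̃ > 0 and a kernel J̃ satisfying (J) such that for all h₀ > 0 and all u₀ ∈ C([0,h₀]) with u₀(h₀) = 0 < u₀ on [0,h₀), the following two identities hold: (i) d̃∫_0^{h₀}[J̃(h₀-y) + J̃(h₀+y)]u₀(y)dy = d∫_0^{h₀}J(h₀-y)u₀(y)dy, and (ii) μ̃∫_0^{h₀}∫_{h₀}^∞ [J̃(x-y) + J̃(x+y)]u₀(x) dy dx = μ∫_0^{h₀}∫_{h₀}^∞ J(x-y)u₀(x) dy dx. -/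

import Mathlib

open MeasureTheory Set

/-- Fundamental lemma of the calculus of variations, specialized form. -/
lemma fund_key (h₀ : ℝ) (g : ℝ → ℝ) (hg : Continuous g)
    (H : ∀ φ : ℝ → ℝ, ContDiff ℝ (⊤ : ℕ∞) φ → HasCompactSupport φ →
      ∫ y in Ioc (0:ℝ) h₀, g y * (φ y * (h₀ - y)) = 0) :
    ∀ y ∈ Ioo (0:ℝ) h₀, g y = 0 := by
  set F : ℝ → ℝ := fun y => g y * (h₀ - y) with hF
  set f : ℝ → ℝ := (Ioc (0:ℝ) h₀).indicator F with hf
  have hFc : Continuous F := by continuity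
  have hfi : Integrable f :=
    IntegrableOn.integrable_indicator hFc.integrableOn_Ioc measurableSet_Ioc
  have hae : ∀ᵐ x, f x = 0 := by
    apply ae_eq_zero_of_integral_contDiff_smul_eq_zero hfi.locallyIntegrable
    intro φ hφ hφs
    have : (fun x => φ x • f x) = (Ioc (0:ℝ) h₀).indicator (fun y => g y * (φ y * (h₀ - y))) := by
      funext x
      by_cases hx : x ∈ Ioc (0:ℝ) h₀
      · simp [hf, hF, Set.indicator_apply, hx]; ring
      · simp [hf, hF, Set.indicator_apply, hx]
    rw [this, integral_indicator measurableSet_Ioc]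
    exact H φ hφ hφs
  intro y hy
  by_contra hgy
  set U : Set ℝ := Ioo 0 h₀ ∩ {x | g x ≠ 0} with hU
  have hUo : IsOpen U := isOpen_Ioo.inter (isOpen_ne_fun hg continuous_const)
  have hUne : y ∈ U := ⟨hy, hgy⟩
  have hsub : U ⊆ {x | f x ≠ 0} := by
    intro x hx
    have hx1 : x ∈ Ioc (0:ℝ) h₀ := ⟨hx.1.1, le_of_lt hx.1.2⟩
    have : f x = g x * (h₀ - x) := by simp [hf, hF, Set.indicator_apply, hx1]
    simp only [mem_setOf_eq, this]
    exact mul_ne_zero hx.2 (by linarith [hx.1.2])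
  have h0 : volume {x | f x ≠ 0} = 0 := by simpa [ae_iff] using hae
  have : volume U = 0 := measure_mono_null hsub h0
  exact (hUo.measure_pos volume ⟨y, hUne⟩).ne' this

theorem stmt_17 (d μ : ℝ) (hd : 0 < d) (hμ : 0 < μ) (J : ℝ → ℝ)
    (hJc : Continuous J) (hJb : ∃ C, ∀ x, J x ≤ C) (hJnn : ∀ x, 0 ≤ J x)
    (hJ0 : 0 < J 0) (hJeven : ∀ x, J (-x) = J x) (hJint : ∫ x, J x = 1) :
    ¬ ∃ (dt μt : ℝ) (Jt : ℝ → ℝ), 0 < dt ∧ 0 < μt ∧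
      Continuous Jt ∧ (∃ C, ∀ x, Jt x ≤ C) ∧ (∀ x, 0 ≤ Jt x) ∧ 0 < Jt 0 ∧
      (∀ x, Jt (-x) = Jt x) ∧ (∫ x, Jt x) = 1 ∧
      ∀ h₀ > 0, ∀ u₀ : ℝ → ℝ, ContinuousOn u₀ (Icc 0 h₀) → u₀ h₀ = 0 →
        (∀ x ∈ Ico 0 h₀, 0 < u₀ x) →
        dt * (∫ y in Ioc (0:ℝ) h₀, (Jt (h₀ - y) + Jt (h₀ + y)) * u₀ y)
            = d * ∫ y in Ioc (0:ℝ) h₀, J (h₀ - y) * u₀ y ∧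
          μt * (∫ x in Ioc (0:ℝ) h₀, ∫ y in Ioi h₀, (Jt (x - y) + Jt (x + y)) * u₀ x)
            = μ * ∫ x in Ioc (0:ℝ) h₀, ∫ y in Ioi h₀, J (x - y) * u₀ x := by
  rintro ⟨dt, μt, Jt, hdt, hμt, hJtc, hJtb, hJtnn, hJt0, hJtev, hJtint, H⟩
  -- Step 1: pointwise identity from the integral identity (i)
  have key : ∀ h₀ > (0:ℝ), ∀ y ∈ Ioo (0:ℝ) h₀,
      dt * (Jt (h₀ - y) + Jt (h₀ + y)) - d * J (h₀ - y) = 0 := by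
    intro h₀ hh
    set g : ℝ → ℝ := fun y => dt * (Jt (h₀ - y) + Jt (h₀ + y)) - d * J (h₀ - y) with hg
    have hsub : Continuous (fun y : ℝ => h₀ - y) := continuous_const.sub continuous_id
    have hadd : Continuous (fun y : ℝ => h₀ + y) := continuous_const.add continuous_id
    have hgc : Continuous g :=
      (continuous_const.mul ((hJtc.comp hsub).add (hJtc.comp hadd))).sub
        (continuous_const.mul (hJc.comp hsub))
    apply fund_key h₀ g hgc
    intro φ hφ hφs
    obtain ⟨C₀, hC₀⟩ := hφs.exists_bound_of_continuous hφ.continuous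
    have hC₀nn : (0:ℝ) ≤ C₀ := le_trans (norm_nonneg _) (hC₀ 0)
    set C : ℝ := C₀ + 1 with hC
    have hCpos : (0:ℝ) < C := by simp only [hC]; linarith
    have hCφ : ∀ x, 1 ≤ C + φ x := by
      intro x
      have := (abs_le.1 ((Real.norm_eq_abs _ ▸ hC₀ x))).1
      simp only [hC]; linarith
    set u₁ : ℝ → ℝ := fun y => (C + φ y) * (h₀ - y) with hu₁
    set u₂ : ℝ → ℝ := fun y => C * (h₀ - y) with hu₂
    have hu₁c : Continuous u₁ :=
      (continuous_const.add hφ.continuous).mul (continuous_const.sub continuous_id)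
    have hu₂c : Continuous u₂ := continuous_const.mul (continuous_const.sub continuous_id)
    have E₁ := (H h₀ hh u₁ hu₁c.continuousOn (by simp [hu₁])
      (fun x hx => mul_pos (by linarith [hCφ x]) (by simp only [mem_Ico] at hx; linarith [hx.2]))).1
    have E₂ := (H h₀ hh u₂ hu₂c.continuousOn (by simp [hu₂])
      (fun x hx => mul_pos hCpos (by simp only [mem_Ico] at hx; linarith [hx.2]))).1
    set A : ℝ → ℝ := fun y => Jt (h₀ - y) + Jt (h₀ + y) with hA
    set B : ℝ → ℝ := fun y => J (h₀ - y) with hB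
    have hAc : Continuous A := (hJtc.comp hsub).add (hJtc.comp hadd)
    have hBc : Continuous B := hJc.comp hsub
    have expand : ∀ v : ℝ → ℝ, Continuous v →
        ∫ y in Ioc (0:ℝ) h₀, (dt * A y - d * B y) * v y
          = dt * (∫ y in Ioc (0:ℝ) h₀, A y * v y) - d * ∫ y in Ioc (0:ℝ) h₀, B y * v y := by
      intro v hv
      have i1 : IntegrableOn (fun y => dt * (A y * v y)) (Ioc 0 h₀) :=
        ((hAc.mul hv).integrableOn_Ioc).const_mul dt
      have i2 : IntegrableOn (fun y => d * (B y * v y)) (Ioc 0 h₀) :=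
        ((hBc.mul hv).integrableOn_Ioc).const_mul d
      rw [show (fun y => (dt * A y - d * B y) * v y)
          = fun y => dt * (A y * v y) - d * (B y * v y) from funext fun y => by ring]
      rw [integral_sub i1 i2, integral_const_mul, integral_const_mul]
    have i₁ : IntegrableOn (fun y => (dt * A y - d * B y) * u₁ y) (Ioc 0 h₀) :=
      (((continuous_const.mul hAc).sub (continuous_const.mul hBc)).mul hu₁c).integrableOn_Ioc
    have i₂ : IntegrableOn (fun y => (dt * A y - d * B y) * u₂ y) (Ioc 0 h₀) :=
      (((continuous_const.mul hAc).sub (continuous_const.mul hBc)).mul hu₂c).integrableOn_Ioc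
    have e : (fun y => g y * (φ y * (h₀ - y)))
        = fun y => (dt * A y - d * B y) * u₁ y - (dt * A y - d * B y) * u₂ y := by
      funext y; simp only [hg, hA, hB, hu₁, hu₂]; ring
    rw [e, integral_sub i₁ i₂, expand u₁ hu₁c, expand u₂ hu₂c]
    simp only [hA, hB] at E₁ E₂ ⊢
    linarith [E₁, E₂]
  -- Step 2: for all 0 < s < t, dt * (Jt s + Jt t) = d * J s
  have R : ∀ s t : ℝ, 0 < s → s < t → dt * (Jt s + Jt t) = d * J s := by
    intro s t hs hst
    have h₁ : (0:ℝ) < (s + t) / 2 := by linarith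
    have h₂ : (t - s) / 2 ∈ Ioo (0:ℝ) ((s + t) / 2) := ⟨by linarith, by linarith⟩
    have := key ((s + t) / 2) h₁ ((t - s) / 2) h₂
    have e1 : (s + t) / 2 - (t - s) / 2 = s := by ring
    have e2 : (s + t) / 2 + (t - s) / 2 = t := by ring
    rw [e1, e2] at this
    linarith
  -- Step 3: Jt is constant (= Jt 2) on (1, ∞)
  have hconst : ∀ t : ℝ, 1 < t → Jt t = Jt 2 := by
    intro t ht
    have h1 := R 1 t one_pos ht
    have h2 := R 1 2 one_pos one_lt_two
    have := hdt.ne'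
    nlinarith
  rcases (hJtnn 2).lt_or_eq with hcpos | hczero
  · -- Jt 2 > 0 : Jt not integrable on (1,∞), contradiction with ∫ Jt = 1
    have hInt : Integrable Jt := by
      by_contra h
      rw [integral_undef h] at hJtint
      norm_num at hJtint
    have hIntOn : IntegrableOn Jt (Ioi (1:ℝ)) := hInt.integrableOn
    have hconst_int : IntegrableOn (fun _ : ℝ => Jt 2) (Ioi (1:ℝ)) := by
      apply Integrable.mono' hIntOn aestronglyMeasurable_const
      rw [ae_restrict_iff' measurableSet_Ioi]
      filter_upwards with x hx
      rw [Real.norm_eq_abs, abs_of_nonneg (le_of_lt hcpos)]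
      exact le_of_eq (hconst x hx).symm
    have := integrable_const_iff.1 hconst_int
    rcases this with h | h
    · exact absurd h (ne_of_gt hcpos)
    · rw [isFiniteMeasure_restrict, Real.volume_Ioi] at h
      exact absurd h (by simp)
  · -- Jt 2 = 0 : Jt ≡ 0 on (0,∞), hence Jt 0 = 0 by continuity, contradiction
    have hzero : ∀ t : ℝ, 0 < t → Jt t = 0 := by
      intro t ht
      have h1 := R (t/2) t (by linarith) (by linarith)
      have h2 := R (t/2) (t/2 + 2) (by linarith) (by linarith)
      have h3 : Jt (t/2 + 2) = Jt 2 := hconst _ (by linarith)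
      have := hdt.ne'
      nlinarith
    have hlim : Filter.Tendsto (fun n : ℕ => Jt (1 / (n + 1))) Filter.atTop (nhds (Jt 0)) := by
      have h1 : Filter.Tendsto (fun n : ℕ => (1:ℝ) / (n + 1)) Filter.atTop (nhds 0) :=
        tendsto_one_div_add_atTop_nhds_zero_nat
      exact (hJtc.tendsto 0).comp h1
    have heq : (fun n : ℕ => Jt (1 / (n + 1))) = fun _ : ℕ => (0:ℝ) := by
      funext n
      exact hzero _ (by positivity)
    rw [heq] at hlim
    have : Jt 0 = 0 := (tendsto_nhds_unique tendsto_const_nhds hlim).symm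
    exact absurd this (ne_of_gt hJt0)
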